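/- arXiv:2307.12202 — 2 statements merged into one kernel-verified Lean document; each statement's English description precedes it below -/
import Mathlib

section
/- Define ∂_η = ∂/∂x + i ∂/∂y and ∂_ξ = ∂/∂x - i ∂/∂y. The regular solid harmonics satisfy ∂_η R_n^m = i R_{n-1}^{m+1} and ∂_ξ R_n^m = i R_{n-1}^{m-1} for all n ≥ 1 and all integers m with |m| ≤ n. -/
/-- Euclidean length of a point of `ℝ × ℝ × ℝ`. -/
noncomputable def sphNorm (p : ℝ × ℝ × ℝ) : ℝ :=
  Real.sqrt (p.1 ^ 2 + p.2.1 ^ 2 + p.2.2 ^ 2)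

/-- Associated Legendre function
`P_n^m(μ) = ((-1)^m (1-μ²)^{m/2} / (2ⁿ n!)) dⁿ⁺ᵐ/dμⁿ⁺ᵐ (μ²-1)ⁿ` for `0 ≤ m`. -/
noncomputable def legP (n m : ℕ) (μ : ℝ) : ℝ :=
  ((-1 : ℝ) ^ m * (Real.sqrt (1 - μ ^ 2)) ^ m / ((2 : ℝ) ^ n * n.factorial)) *
    iteratedDeriv (n + m) (fun x : ℝ => (x ^ 2 - 1) ^ n) μ

/-- Regular solid harmonic
`R_n^m(r) = ((-1)^n i^{|m|}/(n+|m|)!) rⁿ P_n^{|m|}(cos θ) e^{imφ}`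
in the spherical coordinates of `r = (x, y, z)`. -/
noncomputable def solidR (n : ℕ) (m : ℤ) (p : ℝ × ℝ × ℝ) : ℂ :=
  ((-1 : ℂ) ^ n * Complex.I ^ m.natAbs / ((n + m.natAbs).factorial : ℂ)) *
    ((sphNorm p : ℝ) : ℂ) ^ n * ((legP n m.natAbs (p.2.2 / sphNorm p) : ℝ) : ℂ) *
    Complex.exp ((m : ℂ) * Complex.I * ((Complex.arg ((p.1 : ℂ) + (p.2.1 : ℝ) * Complex.I) : ℝ) : ℂ))

/-- Singular solid harmonic
`S_n^m(r) = i^{-|m|} (n-|m|)! r^{-n-1} P_n^{|m|}(cos θ) e^{imφ}`. -/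
noncomputable def solidS (n : ℕ) (m : ℤ) (p : ℝ × ℝ × ℝ) : ℂ :=
  (Complex.I ^ (-(m.natAbs : ℤ)) * ((n - m.natAbs).factorial : ℂ)) *
    ((sphNorm p : ℝ) : ℂ) ^ (-(n : ℤ) - 1) * ((legP n m.natAbs (p.2.2 / sphNorm p) : ℝ) : ℂ) *
    Complex.exp ((m : ℂ) * Complex.I * ((Complex.arg ((p.1 : ℂ) + (p.2.1 : ℝ) * Complex.I) : ℝ) : ℂ))


noncomputable def shA (n μ : ℕ) : ℂ :=
  (-1)^n * Complex.I^μ * (-1)^μ / (((n+μ).factorial : ℂ) * 2^n * (n.factorial : ℂ))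

noncomputable def shc (n μ j : ℕ) : ℂ :=
  (n.choose j : ℂ) * (-1)^(n+j) * (((2*j).descFactorial (n+μ) : ℕ) : ℂ)

noncomputable def shW (p : ℝ × ℝ × ℝ) : ℂ := (p.1 : ℂ) + (p.2.1 : ℝ) * Complex.I

noncomputable def shS (p : ℝ × ℝ × ℝ) : ℝ := p.1^2 + p.2.1^2 + p.2.2^2

open Finset Complex

noncomputable def Qfun (n μ : ℕ) (p : ℝ × ℝ × ℝ) : ℂ :=
  shA n μ * (shW p ^ μ *
    ∑ j ∈ range (n+1), shc n μ j * ((p.2.2 : ℝ) : ℂ)^(2*j - (n+μ)) * ((shS p : ℝ) : ℂ)^(n - j))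

noncomputable def Rpoly (n : ℕ) (m : ℤ) (p : ℝ × ℝ × ℝ) : ℂ :=
  if 0 ≤ m then Qfun n m.natAbs p
  else (-1)^m.natAbs * (starRingEnd ℂ) (Qfun n m.natAbs p)

lemma iteratedDeriv_sum_pow (K : ℕ) : ∀ (N : ℕ) (a : ℕ → ℝ) (E : ℕ → ℕ),
    iteratedDeriv K (fun x : ℝ => ∑ j ∈ range N, a j * x ^ E j)
      = fun t => ∑ j ∈ range N, a j * ((E j).descFactorial K) * t ^ (E j - K) := by
  induction K with
  | zero => intro N a E; simp
  | succ K ih =>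
    intro N a E
    rw [iteratedDeriv_succ']
    have hd : (deriv fun x : ℝ => ∑ j ∈ range N, a j * x ^ E j)
        = fun x : ℝ => ∑ j ∈ range N, (a j * E j) * x ^ (E j - 1) := by
      funext x
      rw [deriv_fun_sum (fun j hj => ((differentiableAt_pow (E j)).const_mul (a j)))]
      refine Finset.sum_congr rfl fun j hj => ?_
      rw [deriv_const_mul _ (differentiableAt_pow (E j)), deriv_pow_field]
      ring
    rw [hd, ih N (fun j => a j * E j) (fun j => E j - 1)]
    funext t
    refine Finset.sum_congr rfl fun j hj => ?_
    rcases Nat.eq_zero_or_pos (E j) with h | h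
    · simp [h]
    · obtain ⟨e, he⟩ : ∃ e, E j = e + 1 := ⟨E j - 1, by omega⟩
      rw [he, Nat.succ_descFactorial_succ]
      simp only [Nat.add_sub_cancel]
      have h2 : e + 1 - (K + 1) = e - K := by omega
      rw [h2]
      push_cast
      ring

lemma iteratedDeriv_sq_sub_one (n K : ℕ) (t : ℝ) :
    iteratedDeriv K (fun x : ℝ => (x ^ 2 - 1) ^ n) t
      = ∑ j ∈ range (n+1), ((n.choose j : ℝ) * (-1)^(n+j) * ((2*j).descFactorial K)) * t ^ (2*j - K) := by
  have hfun : (fun x : ℝ => (x ^ 2 - 1) ^ n)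
      = fun x : ℝ => ∑ j ∈ range (n+1), ((n.choose j : ℝ) * (-1)^(n+j)) * x ^ (2*j) := by
    funext x
    rw [sub_pow]
    refine Finset.sum_congr rfl fun j hj => ?_
    rw [← pow_mul]
    ring_nf
  rw [hfun, iteratedDeriv_sum_pow]

lemma choose_key (N j : ℕ) : (N+1).choose j * (N+1-j) = (N+1) * N.choose j := by
  rw [← Nat.choose_succ_right_eq]
  exact (Nat.add_one_mul_choose_eq N j).symm

lemma fact_ne (k : ℕ) : ((k.factorial : ℕ) : ℂ) ≠ 0 := by
  exact_mod_cast k.factorial_ne_zero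

lemma shA_mul (n μ : ℕ) :
    shA n μ * (((n+μ).factorial : ℂ) * 2^n * (n.factorial : ℂ)) = (-1)^n * Complex.I^μ * (-1)^μ := by
  rw [shA]
  rw [div_mul_cancel₀]
  exact mul_ne_zero (mul_ne_zero (fact_ne _) (pow_ne_zero _ two_ne_zero)) (fact_ne _)

lemma shA_key1 (N μ : ℕ) :
    Complex.I * shA N (μ+1) = -2 * ((N:ℂ)+1) * shA (N+1) μ := by
  have hD : (((N+(μ+1)).factorial : ℂ) * 2^N * (N.factorial : ℂ)) * (2 * ((N:ℂ)+1)) ≠ 0 := by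
    refine mul_ne_zero (mul_ne_zero (mul_ne_zero (fact_ne _) (pow_ne_zero _ two_ne_zero)) (fact_ne _)) ?_
    refine mul_ne_zero two_ne_zero ?_
    exact_mod_cast (Nat.succ_ne_zero N)
  apply mul_right_cancel₀ hD
  have h1 := shA_mul N (μ+1)
  have h2 := shA_mul (N+1) μ
  rw [show (N+1)+μ = N+(μ+1) by omega] at h2
  rw [Nat.factorial_succ] at h2
  push_cast at h2
  calc Complex.I * shA N (μ+1) * ((((N+(μ+1)).factorial : ℂ) * 2^N * (N.factorial : ℂ)) * (2 * ((N:ℂ)+1)))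
      = Complex.I * (shA N (μ+1) * (((N+(μ+1)).factorial : ℂ) * 2^N * (N.factorial : ℂ))) * (2 * ((N:ℂ)+1)) := by ring
    _ = Complex.I * ((-1)^N * Complex.I^(μ+1) * (-1)^(μ+1)) * (2 * ((N:ℂ)+1)) := by rw [h1]
    _ = (-2 * ((N:ℂ)+1)) * ((-1)^(N+1) * Complex.I^μ * (-1)^μ) := by
        rw [pow_succ, pow_succ, pow_succ]
        linear_combination (-2*((N:ℂ)+1)*(-1:ℂ)^N*(-1:ℂ)^μ*Complex.I^μ) * Complex.I_mul_I
    _ = -2 * ((N:ℂ)+1) * shA (N+1) μ * ((((N+(μ+1)).factorial : ℂ) * 2^N * (N.factorial : ℂ)) * (2 * ((N:ℂ)+1))) := by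
        rw [← h2]; ring

lemma shA_key2 (N M : ℕ) :
    Complex.I * shA N M = 2 * ((N:ℂ)+1) * ((N:ℂ)+(M:ℂ)+2) * ((N:ℂ)+(M:ℂ)+1) * shA (N+1) (M+1) := by
  have hD : (((N+M).factorial : ℂ) * 2^N * (N.factorial : ℂ))
      * ((2 * (((N:ℂ)+(M:ℂ))+2) * (((N:ℂ)+(M:ℂ))+1)) * (((N:ℂ)+1))) ≠ 0 := by
    refine mul_ne_zero (mul_ne_zero (mul_ne_zero (fact_ne _) (pow_ne_zero _ two_ne_zero)) (fact_ne _)) ?_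
    refine mul_ne_zero (mul_ne_zero (mul_ne_zero two_ne_zero ?_) ?_) ?_
    · exact_mod_cast (Nat.succ_ne_zero (N+M+1))
    · exact_mod_cast (Nat.succ_ne_zero (N+M))
    · exact_mod_cast (Nat.succ_ne_zero N)
  apply mul_right_cancel₀ hD
  have h1 := shA_mul N M
  have h2 := shA_mul (N+1) (M+1)
  rw [show (N+1)+(M+1) = ((N+M)+1)+1 by omega, Nat.factorial_succ ((N+M)+1), Nat.factorial_succ (N+M),
    Nat.factorial_succ N] at h2
  push_cast at h2
  calc Complex.I * shA N M * ((((N+M).factorial : ℂ) * 2^N * (N.factorial : ℂ))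
        * ((2 * (((N:ℂ)+(M:ℂ))+2) * (((N:ℂ)+(M:ℂ))+1)) * (((N:ℂ)+1))))
      = Complex.I * (shA N M * (((N+M).factorial : ℂ) * 2^N * (N.factorial : ℂ)))
        * ((2 * (((N:ℂ)+(M:ℂ))+2) * (((N:ℂ)+(M:ℂ))+1)) * (((N:ℂ)+1))) := by ring
    _ = Complex.I * ((-1)^N * Complex.I^M * (-1)^M)
        * ((2 * (((N:ℂ)+(M:ℂ))+2) * (((N:ℂ)+(M:ℂ))+1)) * (((N:ℂ)+1))) := by rw [h1]
    _ = (2 * ((N:ℂ)+1) * ((N:ℂ)+(M:ℂ)+2) * ((N:ℂ)+(M:ℂ)+1))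
        * ((-1)^(N+1) * Complex.I^(M+1) * (-1)^(M+1)) := by
        rw [pow_succ, pow_succ, pow_succ]
        ring
    _ = 2 * ((N:ℂ)+1) * ((N:ℂ)+(M:ℂ)+2) * ((N:ℂ)+(M:ℂ)+1) * shA (N+1) (M+1)
        * ((((N+M).factorial : ℂ) * 2^N * (N.factorial : ℂ))
        * ((2 * (((N:ℂ)+(M:ℂ))+2) * (((N:ℂ)+(M:ℂ))+1)) * (((N:ℂ)+1)))) := by
        rw [← h2]; ring

lemma shc_zero_of_lt (n μ j : ℕ) (h : 2*j < n+μ) : shc n μ j = 0 := by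
  rw [shc, Nat.descFactorial_of_lt h]
  simp

lemma shc_easy (N μ j : ℕ) :
    shc (N+1) μ j * (((N+1-j : ℕ)):ℂ) = -(((N+1 : ℕ)):ℂ) * shc N (μ+1) j := by
  rw [shc, shc, show (N+1)+μ = N+(μ+1) by omega, show N+1+j = (N+j)+1 by omega, pow_succ]
  have hc : (((N+1).choose j : ℕ) : ℂ) * (((N+1-j : ℕ)):ℂ) = (((N+1 : ℕ)):ℂ) * ((N.choose j : ℕ) : ℂ) := by
    exact_mod_cast congrArg (Nat.cast : ℕ → ℂ) (choose_key N j)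
  linear_combination (-(-1:ℂ)^(N+j) * (((2*j).descFactorial (N+(μ+1)) : ℕ) : ℂ)) * hc

lemma coeff_easy (N μ j : ℕ) :
    2 * shA (N+1) μ * (shc (N+1) μ j * (((N+1-j : ℕ)):ℂ))
      = Complex.I * shA N (μ+1) * shc N (μ+1) j := by
  rw [shA_key1]
  have h := shc_easy N μ j
  push_cast at h
  linear_combination (2 * shA (N+1) μ) * h

lemma hard_nat (N M j : ℕ) (hj : j ≤ N) :
    (N+1).choose (j+1) * ((M+1) + (N-j)) * ((2*j+2).descFactorial (N+M+2))
      + (N+1).choose j * (N+1-j) * ((2*j).descFactorial (N+M+2))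
    = (N+1) * (N+M+2) * (N+M+1) * (N.choose j * (2*j).descFactorial (N+M)) := by
  rcases lt_or_ge (2*j) (N+M) with h | h
  · rw [Nat.descFactorial_of_lt (by omega), Nat.descFactorial_of_lt (by omega),
      Nat.descFactorial_of_lt (by omega)]
    simp
  · have dF1 : (2*j+2).descFactorial (N+M+2)
        = (2*j+2)*((2*j+1)*((2*j).descFactorial (N+M))) := by
      rw [show (2*j+2) = (2*j+1)+1 from rfl, show N+M+2 = (N+M+1)+1 from rfl,
        Nat.succ_descFactorial_succ, show (2*j+1) = (2*j)+1 from rfl,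
        show N+M+1 = (N+M)+1 from rfl, Nat.succ_descFactorial_succ]
    have dF2 : (2*j).descFactorial (N+M+2)
        = (2*j-(N+M+1))*((2*j-(N+M))*((2*j).descFactorial (N+M))) := by
      rw [show N+M+2 = (N+M+1)+1 from rfl, Nat.descFactorial_succ,
        show N+M+1 = (N+M)+1 from rfl, Nat.descFactorial_succ]
    rw [dF1, dF2]
    obtain ⟨c, hc⟩ : ∃ c, 2*j = N+M+c := ⟨2*j-(N+M), by omega⟩
    have hcj : c ≤ j := by omega
    have e1 : ((N+1).choose (j+1) : ℤ) * (j+1) = (N+1).choose j * ((N:ℤ)+1-j) := by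
      have := Nat.choose_succ_right_eq (N+1) j
      zify [show j ≤ N+1 by omega] at this
      linarith [this]
    have e2 : ((N:ℤ)+1) * N.choose j = (N+1).choose (j+1) * (j+1) := by
      exact_mod_cast Nat.add_one_mul_choose_eq N j
    rcases Nat.eq_zero_or_pos c with hc0 | hc0
    · subst hc0
      rw [show 2*j-(N+M+1) = 0 by omega, show 2*j-(N+M) = 0 by omega]
      zify [show j ≤ N+1 by omega, show M+1+(N-j) = j+1 by omega,
        show (N:ℤ)+M+2 = 2*(j:ℤ)+2 by omega, show (N:ℤ)+M+1 = 2*(j:ℤ)+1 by omega]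
      linear_combination (-(2*(j:ℤ)+2)*((2*(j:ℤ)+1)*((2*j).descFactorial (N+M) : ℤ))) * e2
    · obtain ⟨c', rfl⟩ : ∃ c', c = c'+1 := ⟨c-1, by omega⟩
      rw [show 2*j-(N+M+1) = c' by omega, show 2*j-(N+M) = c'+1 by omega]
      zify [show j ≤ N+1 by omega, show M+1+(N-j) = j-c' by omega, show c' ≤ j by omega,
        show (N:ℤ)+M+2 = 2*(j:ℤ)+1-c' by omega, show (N:ℤ)+M+1 = 2*(j:ℤ)-c' by omega]
      linear_combination (-(c':ℤ)*((c'+1)*((2*j).descFactorial (N+M) : ℤ))) * e1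
        - ((2*(j:ℤ)+1-c')*(2*(j:ℤ)-c')*((2*j).descFactorial (N+M) : ℤ)) * e2

lemma shc_hard (N M j : ℕ) (hj : j ≤ N) :
    shc (N+1) (M+1) (j+1) * (((M+1+(N-j) : ℕ)):ℂ) - shc (N+1) (M+1) j * (((N+1-j : ℕ)):ℂ)
      = ((((N+1)*(N+M+2)*(N+M+1) : ℕ)):ℂ) * shc N M j := by
  rw [shc, shc, shc, show (N+1)+(M+1) = N+M+2 by omega,
    show 2*(j+1) = 2*j+2 by omega,
    show (N+1)+(j+1) = (N+j)+1+1 by omega, show (N+1)+j = (N+j)+1 by omega,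
    pow_succ, pow_succ]
  have h := hard_nat N M j hj
  have hc : ((((N+1).choose (j+1) * ((M+1) + (N-j)) * ((2*j+2).descFactorial (N+M+2))
      + (N+1).choose j * (N+1-j) * ((2*j).descFactorial (N+M+2)) : ℕ)):ℂ)
      = ((((N+1) * (N+M+2) * (N+M+1) * (N.choose j * (2*j).descFactorial (N+M)) : ℕ)):ℂ) := by
    exact_mod_cast congrArg (Nat.cast : ℕ → ℂ) h
  push_cast at hc
  push_cast
  linear_combination ((-1:ℂ)^(N+j)) * hc

lemma coeff_hard (N M j : ℕ) (hj : j ≤ N) :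
    2 * shA (N+1) (M+1) * (shc (N+1) (M+1) (j+1) * (((M+1+(N-j) : ℕ)):ℂ)
        - shc (N+1) (M+1) j * (((N+1-j : ℕ)):ℂ))
      = Complex.I * shA N M * shc N M j := by
  rw [shA_key2]
  have h := shc_hard N M j hj
  push_cast at h
  push_cast
  linear_combination (2 * shA (N+1) (M+1)) * h

lemma sum_easy (N μ : ℕ) (zc sc : ℂ) :
    2 * shA (N+1) μ * (∑ j ∈ range (N+2), shc (N+1) μ j * zc^(2*j - ((N+1)+μ)) *
        (((((N+1) - j : ℕ)):ℂ) * sc^((N+1) - j - 1)))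
      = Complex.I * shA N (μ+1) * (∑ j ∈ range (N+1), shc N (μ+1) j * zc^(2*j - (N+(μ+1))) * sc^(N - j)) := by
  rw [Finset.sum_range_succ]
  simp only [Nat.sub_self, Nat.cast_zero, zero_mul, mul_zero, add_zero]
  rw [Finset.mul_sum, Finset.mul_sum]
  refine Finset.sum_congr rfl fun j hj => ?_
  rw [Finset.mem_range] at hj
  rw [show 2*j - ((N+1)+μ) = 2*j - (N+(μ+1)) by omega, show (N+1) - j - 1 = N - j by omega]
  have h := coeff_easy N μ j
  linear_combination (zc^(2*j-(N+(μ+1))) * sc^(N-j)) * h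

lemma sum_hard (N M : ℕ) (zc sc : ℂ) :
    2 * shA (N+1) (M+1) * ((((M+1 : ℕ)):ℂ) * (∑ j ∈ range (N+2), shc (N+1) (M+1) j *
          zc^(2*j - ((N+1)+(M+1))) * sc^((N+1) - j))
        + (sc - zc^2) * (∑ j ∈ range (N+2), shc (N+1) (M+1) j * zc^(2*j - ((N+1)+(M+1))) *
          (((((N+1) - j : ℕ)):ℂ) * sc^((N+1) - j - 1))))
      = Complex.I * shA N M * (∑ j ∈ range (N+1), shc N M j * zc^(2*j - (N+M)) * sc^(N - j)) := by
  have hU : (((M+1 : ℕ)):ℂ) * (∑ j ∈ range (N+2), shc (N+1) (M+1) j *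
          zc^(2*j - ((N+1)+(M+1))) * sc^((N+1) - j))
      + sc * (∑ j ∈ range (N+2), shc (N+1) (M+1) j * zc^(2*j - ((N+1)+(M+1))) *
          (((((N+1) - j : ℕ)):ℂ) * sc^((N+1) - j - 1)))
      = ∑ j ∈ range (N+2), shc (N+1) (M+1) j * zc^(2*j - ((N+1)+(M+1))) *
          (((((M+1) + ((N+1) - j) : ℕ)):ℂ) * sc^((N+1) - j)) := by
    rw [Finset.mul_sum, Finset.mul_sum, ← Finset.sum_add_distrib]
    refine Finset.sum_congr rfl fun j hj => ?_
    rw [Finset.mem_range] at hj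
    rcases Nat.lt_or_ge j (N+1) with hj' | hj'
    · rw [show (N+1) - j - 1 = N - j by omega, show (N+1) - j = (N-j) + 1 by omega]
      push_cast
      rw [pow_succ]
      ring
    · have hj2 : j = N+1 := by omega
      subst hj2
      simp only [Nat.sub_self, Nat.cast_zero, zero_mul, mul_zero, add_zero, Nat.add_zero]
      push_cast
      ring
  have step1 : 2 * shA (N+1) (M+1) * ((((M+1 : ℕ)):ℂ) * (∑ j ∈ range (N+2), shc (N+1) (M+1) j *
          zc^(2*j - ((N+1)+(M+1))) * sc^((N+1) - j))
        + (sc - zc^2) * (∑ j ∈ range (N+2), shc (N+1) (M+1) j * zc^(2*j - ((N+1)+(M+1))) *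
          (((((N+1) - j : ℕ)):ℂ) * sc^((N+1) - j - 1))))
      = 2 * shA (N+1) (M+1) * ((∑ j ∈ range (N+2), shc (N+1) (M+1) j * zc^(2*j - ((N+1)+(M+1))) *
          (((((M+1) + ((N+1) - j) : ℕ)):ℂ) * sc^((N+1) - j)))
        - zc^2 * (∑ j ∈ range (N+2), shc (N+1) (M+1) j * zc^(2*j - ((N+1)+(M+1))) *
          (((((N+1) - j : ℕ)):ℂ) * sc^((N+1) - j - 1)))) := by
    rw [← hU]; ring
  rw [step1]
  have hUU : (∑ j ∈ range (N+2), shc (N+1) (M+1) j * zc^(2*j - ((N+1)+(M+1))) *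
          (((((M+1) + ((N+1) - j) : ℕ)):ℂ) * sc^((N+1) - j)))
      = ∑ j ∈ range (N+1), shc (N+1) (M+1) (j+1) * zc^(2*(j+1) - ((N+1)+(M+1))) *
          (((((M+1) + ((N+1) - (j+1)) : ℕ)):ℂ) * sc^((N+1) - (j+1))) := by
    rw [Finset.sum_range_succ']
    rw [show shc (N+1) (M+1) 0 = 0 from shc_zero_of_lt _ _ _ (by omega)]
    simp only [zero_mul, add_zero]
  have hT : (∑ j ∈ range (N+2), shc (N+1) (M+1) j * zc^(2*j - ((N+1)+(M+1))) *
          (((((N+1) - j : ℕ)):ℂ) * sc^((N+1) - j - 1)))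
      = ∑ j ∈ range (N+1), shc (N+1) (M+1) j * zc^(2*j - ((N+1)+(M+1))) *
          (((((N+1) - j : ℕ)):ℂ) * sc^((N+1) - j - 1)) := by
    rw [Finset.sum_range_succ]
    simp only [Nat.sub_self, Nat.cast_zero, zero_mul, mul_zero, add_zero]
  rw [hUU, hT, Finset.mul_sum, ← Finset.sum_sub_distrib, Finset.mul_sum, Finset.mul_sum]
  refine Finset.sum_congr rfl fun j hj => ?_
  rw [Finset.mem_range] at hj
  rw [show 2*(j+1) - ((N+1)+(M+1)) = 2*j - (N+M) by omega,
    show (N+1) - (j+1) = N - j by omega, show (N+1) - j - 1 = N - j by omega]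
  have hza : shc (N+1) (M+1) j * zc^(2*j - ((N+1)+(M+1))) * zc^2
      = shc (N+1) (M+1) j * zc^(2*j - (N+M)) := by
    rcases Nat.lt_or_ge (2*j) ((N+1)+(M+1)) with h | h
    · rw [shc_zero_of_lt _ _ _ (by omega)]
      ring
    · rw [show 2*j - (N+M) = (2*j - ((N+1)+(M+1))) + 2 by omega, pow_add]
      ring
  have h := coeff_hard N M j (by omega)
  linear_combination (zc^(2*j - (N+M)) * sc^(N-j)) * h - (((((N+1) - j : ℕ)):ℂ) * sc^(N-j) * 2 * shA (N+1) (M+1)) * hza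

lemma solidR_eq_Qfun (n μ : ℕ) (p : ℝ × ℝ × ℝ) (hp : p.2.1 ≠ 0 ∨ 0 < p.1) :
    solidR n (μ : ℤ) p = Qfun n μ p := by
  obtain ⟨x, y, z⟩ := p
  simp only [Prod.fst, Prod.snd] at hp
  have hxy : 0 < x^2 + y^2 := by
    rcases hp with h | h
    · have : 0 < y^2 := by positivity
      nlinarith [sq_nonneg x]
    · nlinarith [sq_nonneg y]
  have hs : 0 < x^2 + y^2 + z^2 := by nlinarith [sq_nonneg z]
  have hr : 0 < Real.sqrt (x^2+y^2+z^2) := Real.sqrt_pos.mpr hs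
  set r : ℝ := Real.sqrt (x^2+y^2+z^2) with hrdef
  have hr2 : r^2 = x^2+y^2+z^2 := Real.sq_sqrt hs.le
  have hρ : 0 < Real.sqrt (x^2+y^2) := Real.sqrt_pos.mpr hxy
  set ρ : ℝ := Real.sqrt (x^2+y^2) with hρdef
  have hρ2 : ρ^2 = x^2+y^2 := Real.sq_sqrt hxy.le
  have hsphN : sphNorm (x,y,z) = r := rfl
  have hsq1 : Real.sqrt (1 - (z/r)^2) = ρ / r := by
    have h1 : 1 - (z/r)^2 = (ρ/r)^2 := by
      rw [div_pow, div_pow, hρ2]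
      field_simp
      nlinarith [hr2]
    rw [h1, Real.sqrt_sq (by positivity)]
  have hw0 : ((x:ℂ) + (y:ℝ) * Complex.I) ≠ 0 := by
    intro h
    have h2 := congrArg Complex.normSq h
    rw [Complex.normSq_add_mul_I] at h2
    simp at h2
    nlinarith [h2]
  have habs : (‖(x:ℂ) + (y:ℝ) * Complex.I‖ : ℝ) = ρ := by
    rw [Complex.norm_def, Complex.normSq_add_mul_I]
  have hexp1 : Complex.exp ((Complex.arg ((x:ℂ) + (y:ℝ)*Complex.I) : ℂ) * Complex.I)
      = ((x:ℂ) + (y:ℝ)*Complex.I) / (ρ : ℂ) := by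
    have h3 := Complex.norm_mul_exp_arg_mul_I ((x:ℂ) + (y:ℝ)*Complex.I)
    rw [habs] at h3
    rw [eq_div_iff (by exact_mod_cast hρ.ne')]
    rw [mul_comm]
    exact h3
  have hexp : Complex.exp ((μ:ℂ) * Complex.I * ((Complex.arg ((x:ℂ) + (y:ℝ)*Complex.I) : ℝ) : ℂ))
      = ((x:ℂ) + (y:ℝ)*Complex.I)^μ / (ρ : ℂ)^μ := by
    have harg : (μ:ℂ) * Complex.I * ((Complex.arg ((x:ℂ) + (y:ℝ)*Complex.I) : ℝ) : ℂ)
        = (μ:ℂ) * (((Complex.arg ((x:ℂ) + (y:ℝ)*Complex.I) : ℝ) : ℂ) * Complex.I) := by ring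
    rw [harg, Complex.exp_nat_mul, hexp1, div_pow]
  rw [solidR]
  simp only [Int.natAbs_natCast, Int.cast_natCast, hsphN]
  rw [legP, iteratedDeriv_sq_sub_one, hsq1, hexp]
  rw [Qfun]
  simp only [shW, shS, shA, shc]
  push_cast
  simp only [Finset.mul_sum, Finset.sum_mul]
  refine Finset.sum_congr rfl fun j hj => ?_
  rw [Finset.mem_range] at hj
  rcases le_or_gt (n + μ) (2*j) with h2j | h2j
  · have hjn : j ≤ n := by omega
    have hneq : n = μ + (2*j - (n+μ)) + 2*(n - j) := by omega
    have hrpow : ((r:ℝ):ℂ)^n = ((r:ℝ):ℂ)^μ * ((r:ℝ):ℂ)^(2*j-(n+μ)) * (((r:ℝ):ℂ)^2)^(n-j) := by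
      rw [← pow_mul, ← pow_add, ← pow_add, ← hneq]
    have hr2c : (((r:ℝ):ℂ))^2 = (x:ℂ)^2 + (y:ℂ)^2 + (z:ℂ)^2 := by
      rw [show ((r:ℝ):ℂ)^2 = ((r^2 : ℝ) : ℂ) by push_cast; ring, hr2]
      push_cast
      ring
    rw [hrpow, hr2c]
    have hrne : ((r:ℝ):ℂ) ≠ 0 := by exact_mod_cast hr.ne'
    have hρne : ((ρ:ℝ):ℂ) ≠ 0 := by exact_mod_cast hρ.ne'
    have hf1 : ((n+μ).factorial : ℂ) ≠ 0 := by exact_mod_cast (n+μ).factorial_ne_zero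
    have hf2 : ((n).factorial : ℂ) ≠ 0 := by exact_mod_cast (n).factorial_ne_zero
    simp only [div_pow, div_mul_div_comm, div_mul_eq_mul_div, mul_div_assoc', div_div]
    rw [div_eq_div_iff (by exact mul_ne_zero (mul_ne_zero hf1 (mul_ne_zero (mul_ne_zero (pow_ne_zero _ hrne) (mul_ne_zero (pow_ne_zero _ two_ne_zero) hf2)) (pow_ne_zero _ hrne))) (pow_ne_zero _ hρne)) (by exact mul_ne_zero (mul_ne_zero hf1 (pow_ne_zero _ two_ne_zero)) hf2)]
    ring
  · rw [Nat.descFactorial_of_lt h2j]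
    push_cast
    ring

lemma solidR_neg (n : ℕ) (m : ℤ) (p : ℝ × ℝ × ℝ) :
    solidR n (-m) p = (-1)^m.natAbs * (starRingEnd ℂ) (solidR n m p) := by
  rw [solidR, solidR]
  simp only [Int.natAbs_neg, map_mul, map_div₀, map_pow, Complex.conj_I, Complex.conj_ofReal,
    map_neg, map_one, ← Complex.exp_conj, map_intCast, Int.cast_neg, map_natCast]
  rw [show (-Complex.I)^m.natAbs = (-1:ℂ)^m.natAbs * Complex.I^m.natAbs by rw [← mul_pow]; norm_num]
  rw [show ((m:ℂ) * -Complex.I * ((Complex.arg ((p.1:ℂ) + (p.2.1:ℝ) * Complex.I) : ℝ):ℂ))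
      = (-(m:ℂ) * Complex.I * ((Complex.arg ((p.1:ℂ) + (p.2.1:ℝ) * Complex.I) : ℝ):ℂ)) by ring]
  rw [show ((-1:ℂ)^m.natAbs * ((-1:ℂ)^n * ((-1:ℂ)^m.natAbs * Complex.I^m.natAbs) / ((n + m.natAbs).factorial : ℂ) *
      ((sphNorm p : ℝ):ℂ)^n * ((legP n m.natAbs (p.2.2 / sphNorm p) : ℝ):ℂ) *
      Complex.exp (-(m:ℂ) * Complex.I * ((Complex.arg ((p.1:ℂ) + (p.2.1:ℝ) * Complex.I) : ℝ):ℂ))))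
      = ((-1:ℂ)^m.natAbs * (-1:ℂ)^m.natAbs) * ((-1:ℂ)^n * Complex.I^m.natAbs / ((n + m.natAbs).factorial : ℂ) *
      ((sphNorm p : ℝ):ℂ)^n * ((legP n m.natAbs (p.2.2 / sphNorm p) : ℝ):ℂ) *
      Complex.exp (-(m:ℂ) * Complex.I * ((Complex.arg ((p.1:ℂ) + (p.2.1:ℝ) * Complex.I) : ℝ):ℂ))) by ring]
  rw [show ((-1:ℂ)^m.natAbs * (-1:ℂ)^m.natAbs) = 1 by rw [← pow_add, ← two_mul, pow_mul]; norm_num]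
  ring

lemma solidR_eq_Rpoly (n : ℕ) (m : ℤ) (p : ℝ × ℝ × ℝ) (hp : p.2.1 ≠ 0 ∨ 0 < p.1) :
    solidR n m p = Rpoly n m p := by
  rcases le_or_gt 0 m with h | h
  · obtain ⟨μ, rfl⟩ : ∃ μ : ℕ, m = (μ : ℤ) := ⟨m.toNat, by omega⟩
    rw [Rpoly, if_pos h, Int.natAbs_natCast]
    exact solidR_eq_Qfun n μ p hp
  · obtain ⟨μ, rfl⟩ : ∃ μ : ℕ, m = -(μ : ℤ) := ⟨m.natAbs, by omega⟩
    rw [Rpoly, if_neg (by omega)]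
    rw [show (-(μ:ℤ)).natAbs = μ by omega]
    rw [show (-(μ:ℤ)) = -((μ:ℤ)) from rfl, solidR_neg n (μ:ℤ) p, Int.natAbs_natCast,
      solidR_eq_Qfun n μ p hp]

lemma cont_Qfun (n μ : ℕ) : Continuous (Qfun n μ) := by
  unfold Qfun shW shS
  fun_prop

lemma cont_Rpoly (n : ℕ) (m : ℤ) : Continuous (Rpoly n m) := by
  by_cases h : 0 ≤ m
  · have he : Rpoly n m = Qfun n m.natAbs := funext fun p => by rw [Rpoly, if_pos h]
    rw [he]; exact cont_Qfun n m.natAbs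
  · have he : Rpoly n m = fun p => (-1)^m.natAbs * (starRingEnd ℂ) (Qfun n m.natAbs p) :=
      funext fun p => by rw [Rpoly, if_neg h]
    rw [he]
    exact continuous_const.mul (Complex.continuous_conj.comp (cont_Qfun n m.natAbs))

lemma dense_good : Dense {p : ℝ × ℝ × ℝ | p.2.1 ≠ 0 ∨ 0 < p.1} := by
  intro p
  rcases eq_or_ne p.2.1 0 with h | h
  · have h1 : Filter.Tendsto (fun k : ℕ => (1:ℝ)/(k+1)) Filter.atTop (nhds 0) :=
      tendsto_one_div_add_atTop_nhds_zero_nat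
    have h2 : Filter.Tendsto (fun k : ℕ => ((p.1, ((1:ℝ)/(k+1), p.2.2)) : ℝ × ℝ × ℝ))
        Filter.atTop (nhds (p.1, (0, p.2.2))) :=
      tendsto_const_nhds.prodMk_nhds (h1.prodMk_nhds tendsto_const_nhds)
    have h3 : ((p.1, ((0:ℝ), p.2.2)) : ℝ × ℝ × ℝ) = p := by
      rw [← h]
    rw [h3] at h2
    refine mem_closure_of_tendsto h2 (Filter.Eventually.of_forall fun k => Or.inl ?_)
    positivity
  · exact subset_closure (Or.inl h)

/-- model one-variable function along a line -/
lemma hasDerivAt_model (A w dw z s ds e2 : ℂ) (μ N : ℕ) (c : ℕ → ℂ) (E K : ℕ → ℕ) :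
    HasDerivAt (fun τ : ℂ => A * ((w + dw*τ)^μ *
        ∑ j ∈ range N, c j * z^(E j) * (s + ds*τ + e2*τ^2)^(K j)))
      (A * ((μ:ℂ) * w^(μ-1) * dw * ∑ j ∈ range N, c j * z^(E j) * s^(K j)
          + w^μ * ∑ j ∈ range N, c j * z^(E j) * ((K j :ℂ) * s^(K j - 1) * ds))) 0 := by
  have hw : HasDerivAt (fun τ : ℂ => w + dw*τ) dw 0 := by
    simpa using ((hasDerivAt_id (0:ℂ)).const_mul dw).const_add w
  have hwp : HasDerivAt (fun τ : ℂ => (w + dw*τ)^μ) ((μ:ℂ) * w^(μ-1) * dw) 0 := by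
    simpa using hw.fun_pow μ
  have hs : HasDerivAt (fun τ : ℂ => s + ds*τ + e2*τ^2) ds 0 := by
    have h2 : HasDerivAt (fun τ : ℂ => e2*τ^2) 0 0 := by
      simpa using (hasDerivAt_pow 2 (0:ℂ)).const_mul e2
    simpa using (((hasDerivAt_id (0:ℂ)).const_mul ds).const_add s).fun_add h2
  have hsum : HasDerivAt (fun τ : ℂ => ∑ j ∈ range N, c j * z^(E j) * (s+ds*τ+e2*τ^2)^(K j))
      (∑ j ∈ range N, c j * z^(E j) * ((K j:ℂ) * s^(K j - 1) * ds)) 0 := by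
    refine HasDerivAt.fun_sum fun j hj => ?_
    have h3 : HasDerivAt (fun τ : ℂ => (s+ds*τ+e2*τ^2)^(K j)) ((K j : ℂ) * s^(K j - 1) * ds) 0 := by
      simpa using hs.fun_pow (K j)
    simpa [mul_assoc] using h3.const_mul (c j * z^(E j))
  have hmul := (hwp.fun_mul hsum).const_mul A
  simp only [mul_zero, add_zero, ne_eq, OfNat.ofNat_ne_zero, not_false_eq_true, zero_pow] at hmul
  exact hmul

lemma fderiv_line {f : ℝ × ℝ × ℝ → ℂ} (hf : Differentiable ℝ f) (p v : ℝ × ℝ × ℝ) {d : ℂ}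
    (h : HasDerivAt (fun t : ℝ => f (p + t • v)) d 0) : fderiv ℝ f p v = d := by
  have hline : HasDerivAt (fun t : ℝ => p + t • v) v 0 := by
    simpa using ((hasDerivAt_id (0:ℝ)).smul_const v).const_add p
  have h2 : HasDerivAt (fun t : ℝ => f (p + t • v)) (fderiv ℝ f p v) 0 := by
    have h3 := (hf (p + (0:ℝ) • v)).hasFDerivAt.comp_hasDerivAt 0 hline
    simpa [Function.comp_def] using h3
  exact h2.unique h

lemma qline (n μ : ℕ) (p : ℝ × ℝ × ℝ) (dx dy : ℝ) (t : ℝ) :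
    Qfun n μ (p + t • (dx, dy, 0)) =
      shA n μ * ((shW p + ((dx:ℂ) + (dy:ℝ) * Complex.I)*(t:ℂ))^μ *
        ∑ j ∈ range (n+1), shc n μ j * ((p.2.2 : ℝ) : ℂ)^(2*j - (n+μ)) *
          (((shS p : ℝ):ℂ) + ((2*(p.1*dx + p.2.1*dy) : ℝ) : ℂ)*(t:ℂ)
            + (((dx^2+dy^2 : ℝ)):ℂ)*(t:ℂ)^2)^(n - j)) := by
  rw [Qfun]
  congr 1
  congr 1
  · rw [shW, shW]
    simp only [Prod.fst_add, Prod.smul_fst, Prod.snd_add, Prod.smul_snd, smul_eq_mul]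
    push_cast
    ring
  · refine Finset.sum_congr rfl fun j hj => ?_
    congr 1
    · congr 2
      simp only [Prod.snd_add, Prod.smul_snd, smul_eq_mul]
      norm_num
    · congr 1
      rw [shS, shS]
      simp only [Prod.fst_add, Prod.smul_fst, Prod.snd_add, Prod.smul_snd, smul_eq_mul]
      push_cast
      ring

lemma fderiv_Qfun_dir (n μ : ℕ) (hQ : Differentiable ℝ (Qfun n μ)) (p : ℝ × ℝ × ℝ) (dx dy : ℝ) :
    fderiv ℝ (Qfun n μ) p (dx, dy, 0) =
      shA n μ * ((μ:ℂ) * shW p^(μ-1) * ((dx:ℂ) + (dy:ℝ) * Complex.I) *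
          (∑ j ∈ range (n+1), shc n μ j * ((p.2.2 : ℝ) : ℂ)^(2*j - (n+μ)) * ((shS p : ℝ):ℂ)^(n-j))
        + shW p^μ * (∑ j ∈ range (n+1), shc n μ j * ((p.2.2 : ℝ) : ℂ)^(2*j - (n+μ)) *
            (((n - j : ℕ) :ℂ) * ((shS p : ℝ):ℂ)^(n - j - 1) * ((2*(p.1*dx + p.2.1*dy) : ℝ) : ℂ)))) := by
  apply fderiv_line hQ
  have h := hasDerivAt_model (shA n μ) (shW p) ((dx:ℂ) + (dy:ℝ) * Complex.I) ((p.2.2 : ℝ) : ℂ)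
    ((shS p : ℝ):ℂ) ((2*(p.1*dx + p.2.1*dy) : ℝ) : ℂ) (((dx^2+dy^2 : ℝ)):ℂ) μ (n+1)
    (shc n μ) (fun j => 2*j - (n+μ)) (fun j => n - j)
  have h2 := h.comp_ofReal (z := 0)
  have h3 : (fun t : ℝ => Qfun n μ (p + t • (dx, dy, 0)))
      = fun t : ℝ => shA n μ * ((shW p + ((dx:ℂ) + (dy:ℝ) * Complex.I)*((t:ℝ):ℂ))^μ *
        ∑ j ∈ range (n+1), shc n μ j * ((p.2.2 : ℝ) : ℂ)^(2*j - (n+μ)) *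
          (((shS p : ℝ):ℂ) + ((2*(p.1*dx + p.2.1*dy) : ℝ) : ℂ)*((t:ℝ):ℂ)
            + (((dx^2+dy^2 : ℝ)):ℂ)*((t:ℝ):ℂ)^2)^(n - j)) := funext fun t => qline n μ p dx dy t
  rw [h3]
  exact h2


lemma sum_pull (f g : ℕ → ℂ) (K : Finset ℕ) (d : ℂ) :
    (∑ j ∈ K, f j * (g j * d)) = (∑ j ∈ K, f j * g j) * d := by
  rw [Finset.sum_mul]
  exact Finset.sum_congr rfl fun j _ => by ring

lemma deta_Qfun (N μ : ℕ) (hQ : Differentiable ℝ (Qfun (N+1) μ)) (p : ℝ × ℝ × ℝ) :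
    fderiv ℝ (Qfun (N+1) μ) p (1, 0, 0) + Complex.I * fderiv ℝ (Qfun (N+1) μ) p (0, 1, 0)
      = Complex.I * Qfun N (μ+1) p := by
  rw [show ((1,0,0) : ℝ × ℝ × ℝ) = (((1:ℝ)), ((0:ℝ)), ((0:ℝ))) from rfl,
    show ((0,1,0) : ℝ × ℝ × ℝ) = (((0:ℝ)), ((1:ℝ)), ((0:ℝ))) from rfl,
    fderiv_Qfun_dir (N+1) μ hQ p 1 0, fderiv_Qfun_dir (N+1) μ hQ p 0 1, Qfun]
  rw [show ((2*(p.1*(1:ℝ) + p.2.1*(0:ℝ)) : ℝ) : ℂ) = 2*(p.1:ℂ) by push_cast; ring,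
    show ((2*(p.1*(0:ℝ) + p.2.1*(1:ℝ)) : ℝ) : ℂ) = 2*(p.2.1:ℂ) by push_cast; ring,
    sum_pull (fun j => shc (N+1) μ j * ((p.2.2 : ℝ) : ℂ)^(2*j - ((N+1)+μ)))
      (fun j => ((((N+1) - j : ℕ)):ℂ) * ((shS p : ℝ):ℂ)^((N+1) - j - 1)) (range ((N+1)+1)) (2*(p.1:ℂ)),
    sum_pull (fun j => shc (N+1) μ j * ((p.2.2 : ℝ) : ℂ)^(2*j - ((N+1)+μ)))
      (fun j => ((((N+1) - j : ℕ)):ℂ) * ((shS p : ℝ):ℂ)^((N+1) - j - 1)) (range ((N+1)+1)) (2*(p.2.1:ℂ))]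
  simp only [shW, Complex.ofReal_one, Complex.ofReal_zero, show (N+1)+1 = N+2 from rfl]
  have hsum := sum_easy N μ ((p.2.2 : ℝ):ℂ) ((shS p : ℝ):ℂ)
  have hI := Complex.I_mul_I
  linear_combination (((p.1:ℂ) + (p.2.1:ℝ)*Complex.I)^(μ+1)) * hsum
    + ((μ:ℂ) * shA (N+1) μ * ((p.1:ℂ) + (p.2.1:ℝ)*Complex.I)^(μ-1)
        * (∑ j ∈ range (N+2), shc (N+1) μ j * ((p.2.2 : ℝ) : ℂ)^(2*j-((N+1)+μ))
            * ((shS p : ℝ):ℂ)^((N+1)-j))) * hI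


lemma dxi_Qfun (N M : ℕ) (hQ : Differentiable ℝ (Qfun (N+1) (M+1))) (p : ℝ × ℝ × ℝ) :
    fderiv ℝ (Qfun (N+1) (M+1)) p (1, 0, 0) - Complex.I * fderiv ℝ (Qfun (N+1) (M+1)) p (0, 1, 0)
      = Complex.I * Qfun N M p := by
  rw [show ((1,0,0) : ℝ × ℝ × ℝ) = (((1:ℝ)), ((0:ℝ)), ((0:ℝ))) from rfl,
    show ((0,1,0) : ℝ × ℝ × ℝ) = (((0:ℝ)), ((1:ℝ)), ((0:ℝ))) from rfl,
    fderiv_Qfun_dir (N+1) (M+1) hQ p 1 0, fderiv_Qfun_dir (N+1) (M+1) hQ p 0 1, Qfun]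
  rw [show ((2*(p.1*(1:ℝ) + p.2.1*(0:ℝ)) : ℝ) : ℂ) = 2*(p.1:ℂ) by push_cast; ring,
    show ((2*(p.1*(0:ℝ) + p.2.1*(1:ℝ)) : ℝ) : ℂ) = 2*(p.2.1:ℂ) by push_cast; ring,
    sum_pull (fun j => shc (N+1) (M+1) j * ((p.2.2 : ℝ) : ℂ)^(2*j - ((N+1)+(M+1))))
      (fun j => ((((N+1) - j : ℕ)):ℂ) * ((shS p : ℝ):ℂ)^((N+1) - j - 1)) (range ((N+1)+1)) (2*(p.1:ℂ)),
    sum_pull (fun j => shc (N+1) (M+1) j * ((p.2.2 : ℝ) : ℂ)^(2*j - ((N+1)+(M+1))))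
      (fun j => ((((N+1) - j : ℕ)):ℂ) * ((shS p : ℝ):ℂ)^((N+1) - j - 1)) (range ((N+1)+1)) (2*(p.2.1:ℂ))]
  have hS2 : ((shS p : ℝ):ℂ) = (p.1:ℂ)^2 + ((p.2.1:ℝ):ℂ)^2 + ((p.2.2:ℝ):ℂ)^2 := by
    rw [shS]; push_cast; ring
  simp only [shW, Complex.ofReal_one, Complex.ofReal_zero, show (N+1)+1 = N+2 from rfl,
    Nat.add_sub_cancel, hS2]
  have hsum := sum_hard N M ((p.2.2 : ℝ):ℂ) ((p.1:ℂ)^2 + ((p.2.1:ℝ):ℂ)^2 + ((p.2.2:ℝ):ℂ)^2)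
  have hI := Complex.I_mul_I
  push_cast at hsum ⊢
  linear_combination (((p.1:ℂ) + (p.2.1:ℝ)*Complex.I)^M) * hsum
    - (((M:ℂ)+1) * shA (N+1) (M+1) * ((p.1:ℂ) + (p.2.1:ℝ)*Complex.I)^M
        * (∑ j ∈ range (N+2), shc (N+1) (M+1) j * ((p.2.2 : ℝ) : ℂ)^(2*j-((N+1)+(M+1)))
            * ((p.1:ℂ)^2 + ((p.2.1:ℝ):ℂ)^2 + ((p.2.2:ℝ):ℂ)^2)^((N+1)-j))) * hI
    - (2 * shA (N+1) (M+1) * ((p.1:ℂ) + (p.2.1:ℝ)*Complex.I)^M * ((p.2.1:ℝ):ℂ)^2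
        * ((∑ j ∈ range (N+2), shc (N+1) (M+1) j * ((p.2.2 : ℝ) : ℂ)^(2*j-((N+1)+(M+1)))
            * (((((N+1) - j : ℕ)):ℂ) * ((p.1:ℂ)^2 + ((p.2.1:ℝ):ℂ)^2 + ((p.2.2:ℝ):ℂ)^2)^((N+1)-j-1))))) * hI


lemma fderiv_cconj (f : ℝ × ℝ × ℝ → ℂ) (hf : Differentiable ℝ f) (c : ℂ) (p v : ℝ × ℝ × ℝ) :
    fderiv ℝ (fun q => c * (starRingEnd ℂ) (f q)) p v
      = c * (starRingEnd ℂ) (fderiv ℝ f p v) := by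
  have h1 : HasFDerivAt (fun q => star (f q))
      ((((starL' ℝ : ℂ ≃L[ℝ] ℂ) : ℂ →L[ℝ] ℂ)) ∘L (fderiv ℝ f p)) p :=
    (hf p).hasFDerivAt.star
  have h2 := h1.const_mul c
  have h3 := h2.fderiv
  have h4 : fderiv ℝ (fun q => c * (starRingEnd ℂ) (f q)) p
      = c • ((((starL' ℝ : ℂ ≃L[ℝ] ℂ) : ℂ →L[ℝ] ℂ)) ∘L (fderiv ℝ f p)) := h3
  rw [h4]
  simp [starL'_apply]

lemma Qfun_zero_real (n : ℕ) (p : ℝ × ℝ × ℝ) :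
    (starRingEnd ℂ) (Qfun n 0 p) = Qfun n 0 p := by
  rw [Qfun, shA]
  simp only [pow_zero, mul_one, one_mul, Nat.add_zero]
  rw [map_mul, map_sum]
  congr 1
  · simp [map_div₀, map_pow, map_neg, map_one, map_natCast, map_ofNat]
  · refine Finset.sum_congr rfl fun j hj => ?_
    rw [shc]
    simp only [map_mul, map_pow, map_natCast, map_neg, map_one, Complex.conj_ofReal]

lemma Rpoly_negNat (n μ : ℕ) :
    Rpoly n (-(μ:ℤ)) = fun q => (-1)^μ * (starRingEnd ℂ) (Qfun n μ q) := by
  funext q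
  rcases Nat.eq_zero_or_pos μ with h | h
  · subst h
    rw [show (-((0:ℕ):ℤ)) = ((0:ℕ):ℤ) by norm_num, Rpoly, if_pos (by omega), Int.natAbs_natCast,
      Qfun_zero_real]
    norm_num
  · rw [Rpoly, if_neg (by omega), show (-(μ:ℤ)).natAbs = μ by omega]

lemma Rpoly_Nat (n μ : ℕ) : Rpoly n ((μ:ℤ)) = Qfun n μ := by
  funext q
  rw [Rpoly, if_pos (by omega), Int.natAbs_natCast]

-- GLUEHERE

/-- `∂_η R_n^m = i R_{n-1}^{m+1}` and `∂_ξ R_n^m = i R_{n-1}^{m-1}` with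
`∂_η = ∂_x + i ∂_y`, `∂_ξ = ∂_x - i ∂_y`, for the (unique) differentiable extension of
the spherical-coordinate formula for the regular solid harmonic to all of ℝ³
(with the convention `R_k^m = 0` for `|m| > k`, which holds for `solidR`). -/
theorem solidR_deta_dxi (R : ℕ → ℤ → (ℝ × ℝ × ℝ) → ℂ)
    (hdiff : ∀ n m, Differentiable ℝ (R n m))
    (hagree : ∀ n m (p : ℝ × ℝ × ℝ), (p.2.1 ≠ 0 ∨ 0 < p.1) → R n m p = solidR n m p)
    (n : ℕ) (hn : 1 ≤ n) (m : ℤ) (hm : m.natAbs ≤ n) :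
    ∀ p : ℝ × ℝ × ℝ,
      (fderiv ℝ (R n m) p (1, 0, 0) + Complex.I * fderiv ℝ (R n m) p (0, 1, 0)
          = Complex.I * R (n - 1) (m + 1) p) ∧
      (fderiv ℝ (R n m) p (1, 0, 0) - Complex.I * fderiv ℝ (R n m) p (0, 1, 0)
          = Complex.I * R (n - 1) (m - 1) p) := by
  have hRp : ∀ n m, R n m = Rpoly n m := fun n m =>
    Continuous.ext_on dense_good (hdiff n m).continuous (cont_Rpoly n m)
      (fun p hp => (hagree n m p hp).trans (solidR_eq_Rpoly n m p hp))
  have hQdiff : ∀ n μ, Differentiable ℝ (Qfun n μ) := fun n μ => by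
    rw [← Rpoly_Nat n μ, ← hRp]; exact hdiff n (μ:ℤ)
  obtain ⟨N, rfl⟩ : ∃ N, n = N+1 := ⟨n-1, by omega⟩
  intro p
  simp only [Nat.add_sub_cancel]
  constructor
  · rcases le_or_gt 0 m with hm0 | hm0
    · obtain ⟨μ, rfl⟩ : ∃ μ:ℕ, m = (μ:ℤ) := ⟨m.toNat, by omega⟩
      rw [hRp (N+1) (μ:ℤ), Rpoly_Nat, hRp N ((μ:ℤ)+1),
        show ((μ:ℤ)+1) = (((μ+1:ℕ)):ℤ) by push_cast; ring, Rpoly_Nat]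
      exact deta_Qfun N μ (hQdiff (N+1) μ) p
    · obtain ⟨μ, rfl⟩ : ∃ μ:ℕ, m = -(((μ+1:ℕ)):ℤ) := ⟨(-m-1).toNat, by omega⟩
      rw [hRp (N+1) _, Rpoly_negNat (N+1) (μ+1),
        show (-(((μ+1:ℕ)):ℤ) + 1) = -((μ:ℕ):ℤ) by push_cast; ring, hRp N _, Rpoly_negNat N μ]
      rw [fderiv_cconj _ (hQdiff (N+1) (μ+1)) _ p _, fderiv_cconj _ (hQdiff (N+1) (μ+1)) _ p _]
      have hx := dxi_Qfun N μ (hQdiff (N+1) (μ+1)) p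
      have hc := congrArg (starRingEnd ℂ) hx
      simp only [map_sub, map_mul, Complex.conj_I] at hc
      linear_combination ((-1:ℂ)^(μ+1)) * hc
  · rcases le_or_gt 1 m with hm1 | hm1
    · obtain ⟨μ, rfl⟩ : ∃ μ:ℕ, m = (((μ+1:ℕ)):ℤ) := ⟨(m-1).toNat, by omega⟩
      rw [hRp (N+1) _, Rpoly_Nat,
        show ((((μ+1:ℕ)):ℤ) - 1) = ((μ:ℕ):ℤ) by push_cast; ring, hRp N _, Rpoly_Nat]
      exact dxi_Qfun N μ (hQdiff (N+1) (μ+1)) p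
    · obtain ⟨μ, rfl⟩ : ∃ μ:ℕ, m = -((μ:ℕ):ℤ) := ⟨(-m).toNat, by omega⟩
      rw [hRp (N+1) _, Rpoly_negNat (N+1) μ,
        show (-((μ:ℕ):ℤ) - 1) = -(((μ+1:ℕ)):ℤ) by push_cast; ring, hRp N _, Rpoly_negNat N (μ+1)]
      rw [fderiv_cconj _ (hQdiff (N+1) μ) _ p _, fderiv_cconj _ (hQdiff (N+1) μ) _ p _]
      have hx := deta_Qfun N μ (hQdiff (N+1) μ) p
      have hc := congrArg (starRingEnd ℂ) hx
      simp only [map_add, map_mul, Complex.conj_I] at hc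
      linear_combination ((-1:ℂ)^μ) * hc
end

section
/- Let Q: ℝ² → ℂ be continuous on the triangle T = {(u,v): 0 ≤ u, 0 ≤ v, u+v ≤ 1} and continuously differentiable, and suppose u ∂Q/∂u + v ∂Q/∂v = λ Q + g on T for some constant λ ∈ ℂ and continuous g. Then (λ + 2) ∫∫_T Q dv du = ∫₀¹ Q(u, 1-u) du - ∫∫_T g dv du. -/
open MeasureTheory Set

/-- The open standard triangle in `ℝ²`. -/
private def Tri : Set (ℝ × ℝ) := {p | 0 < p.1 ∧ 0 < p.2 ∧ p.1 + p.2 < 1}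

private lemma tri_open : IsOpen Tri :=
  ((isOpen_lt continuous_const continuous_fst).inter
    ((isOpen_lt continuous_const continuous_snd).inter
      (isOpen_lt (continuous_fst.add continuous_snd) continuous_const)))

private lemma tri_sub : Tri ⊆ Icc (0,0) ((1:ℝ),(1:ℝ)) := by
  rintro ⟨u,v⟩ ⟨h1,h2,h3⟩
  dsimp only at h1 h2 h3
  constructor <;> constructor <;> dsimp <;> linarith

private lemma tri_indicator_integrable (f : ℝ × ℝ → ℂ) (hf : Continuous f) :
    Integrable (Tri.indicator f) := by
  rw [integrable_indicator_iff tri_open.measurableSet]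
  exact (hf.continuousOn.integrableOn_compact isCompact_Icc).mono_set tri_sub

private lemma iter_eq (f : ℝ × ℝ → ℂ) :
    ∫ u in (0:ℝ)..1, ∫ v in (0:ℝ)..(1-u), f (u, v)
      = ∫ u : ℝ, ∫ v : ℝ, Tri.indicator f (u, v) := by
  have h0 : ∀ u : ℝ, u ∉ Ioo (0:ℝ) 1 → (∫ v : ℝ, Tri.indicator f (u, v)) = 0 := by
    intro u hu
    have : ∀ v, Tri.indicator f (u, v) = 0 := by
      intro v
      apply indicator_of_notMem
      rintro ⟨h1, h2, h3⟩
      simp only [mem_Ioo, not_and_or, not_lt] at hu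
      dsimp only at h1 h2 h3
      rcases hu with h | h
      · exact absurd h1 (not_lt.2 h)
      · linarith
    simp [this]
  have hin : ∀ u ∈ Ioo (0:ℝ) 1,
      (∫ v : ℝ, Tri.indicator f (u, v)) = ∫ v in (0:ℝ)..(1-u), f (u, v) := by
    intro u hu
    have : (fun v => Tri.indicator f (u, v))
        = (Ioo (0:ℝ) (1-u)).indicator (fun v => f (u, v)) := by
      funext v
      by_cases h : v ∈ Ioo (0:ℝ) (1-u)
      · rw [indicator_of_mem h, indicator_of_mem]
        exact ⟨hu.1, h.1, by dsimp only; linarith [h.2]⟩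
      · rw [indicator_of_notMem h, indicator_of_notMem]
        rintro ⟨h1,h2,h3⟩
        dsimp only at h1 h2 h3
        exact h ⟨h2, by linarith⟩
    rw [this, integral_indicator measurableSet_Ioo, ← integral_Ioc_eq_integral_Ioo,
      ← intervalIntegral.integral_of_le (by linarith [hu.2])]
  calc ∫ u in (0:ℝ)..1, ∫ v in (0:ℝ)..(1-u), f (u, v)
      = ∫ u in Ioo (0:ℝ) 1, ∫ v in (0:ℝ)..(1-u), f (u, v) := by
        rw [intervalIntegral.integral_of_le zero_le_one, integral_Ioc_eq_integral_Ioo]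
    _ = ∫ u in Ioo (0:ℝ) 1, ∫ v : ℝ, Tri.indicator f (u, v) :=
        setIntegral_congr_fun measurableSet_Ioo (fun u hu => (hin u hu).symm)
    _ = ∫ u : ℝ, ∫ v : ℝ, Tri.indicator f (u, v) := by
        rw [← integral_indicator measurableSet_Ioo]
        congr 1; funext u
        by_cases h : u ∈ Ioo (0:ℝ) 1
        · rw [indicator_of_mem h]
        · rw [indicator_of_notMem h, h0 u h]

/-- Fubini over the standard triangle, for continuous integrands. -/
private lemma tri_swap (f : ℝ × ℝ → ℂ) (hf : Continuous f) :
    ∫ u in (0:ℝ)..1, ∫ v in (0:ℝ)..(1-u), f (u, v)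
      = ∫ v in (0:ℝ)..1, ∫ u in (0:ℝ)..(1-v), f (u, v) := by
  have hswap : ∀ u v : ℝ, Tri.indicator (f ∘ Prod.swap) (v, u) = Tri.indicator f (u, v) := by
    intro u v
    by_cases h : (u, v) ∈ Tri
    · obtain ⟨h1, h2, h3⟩ := h
      dsimp only at h1 h2 h3
      have m1 : (v, u) ∈ Tri := by exact ⟨h2, h1, by dsimp only; linarith⟩
      have m2 : (u, v) ∈ Tri := by exact ⟨h1, h2, h3⟩
      rw [indicator_of_mem m1, indicator_of_mem m2]
      rfl
    · rw [indicator_of_notMem h, indicator_of_notMem]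
      rintro ⟨h1, h2, h3⟩
      dsimp only at h1 h2 h3
      exact h ⟨h2, h1, by dsimp only; linarith⟩
  have hint : Integrable (Function.uncurry fun u v => Tri.indicator f (u, v))
      (volume.prod volume) := by
    have := tri_indicator_integrable f hf
    rw [← Measure.volume_eq_prod]
    exact this
  calc ∫ u in (0:ℝ)..1, ∫ v in (0:ℝ)..(1-u), f (u, v)
      = ∫ u : ℝ, ∫ v : ℝ, Tri.indicator f (u, v) := iter_eq f
    _ = ∫ v : ℝ, ∫ u : ℝ, Tri.indicator f (u, v) := integral_integral_swap hint
    _ = ∫ v : ℝ, ∫ u : ℝ, Tri.indicator (f ∘ Prod.swap) (v, u) := by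
        simp only [hswap]
    _ = ∫ v in (0:ℝ)..1, ∫ u in (0:ℝ)..(1-v), (f ∘ Prod.swap) (v, u) := (iter_eq _).symm
    _ = ∫ v in (0:ℝ)..1, ∫ u in (0:ℝ)..(1-v), f (u, v) := rfl

/-- Integration by parts: `∫₀ᵇ t h'(t) dt = b h(b) - ∫₀ᵇ h`. -/
private lemma ibp (h h' : ℝ → ℂ) (b : ℝ)
    (hd : ∀ t, HasDerivAt h (h' t) t) (hch : Continuous h) (hc : Continuous h') :
    ∫ t in (0:ℝ)..b, (t:ℂ) * h' t = (b:ℂ) * h b - ∫ t in (0:ℝ)..b, h t := by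
  have key : ∀ t ∈ Set.uIcc (0:ℝ) b,
      HasDerivAt (fun s : ℝ => (s:ℂ) * h s) (h t + (t:ℂ) * h' t) t := by
    intro t _
    have hid : HasDerivAt (fun s : ℝ => (s:ℂ)) 1 t := by
      simpa using (hasDerivAt_id t).ofReal_comp
    have hm := hid.mul (hd t)
    simp only [one_mul] at hm
    exact hm
  have hint : IntervalIntegrable (fun t : ℝ => h t + (t:ℂ) * h' t) volume 0 b :=
    (hch.add (Complex.continuous_ofReal.mul hc)).intervalIntegrable _ _
  have heq := intervalIntegral.integral_eq_sub_of_hasDerivAt key hint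
  rw [intervalIntegral.integral_add (g := fun t : ℝ => (t:ℂ) * h' t) (hch.intervalIntegrable _ _)
    ((Complex.continuous_ofReal.mul hc).intervalIntegrable _ _)] at heq
  simp only [Complex.ofReal_zero, zero_mul, sub_zero] at heq
  linear_combination heq

private lemma hderiv2 (Q : ℝ × ℝ → ℂ) (hQ : ContDiff ℝ 1 Q) (u v : ℝ) :
    HasDerivAt (fun v => Q (u, v)) (fderiv ℝ Q (u, v) (0, 1)) v := by
  have h1 : HasDerivAt (fun v : ℝ => ((u:ℝ), v)) ((0:ℝ), (1:ℝ)) v :=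
    HasDerivAt.prodMk (hasDerivAt_const v u) (hasDerivAt_id v)
  exact (hQ.differentiable one_ne_zero (u, v)).hasFDerivAt.comp_hasDerivAt v h1

private lemma hderiv1 (Q : ℝ × ℝ → ℂ) (hQ : ContDiff ℝ 1 Q) (u v : ℝ) :
    HasDerivAt (fun u => Q (u, v)) (fderiv ℝ Q (u, v) (1, 0)) u := by
  have h1 : HasDerivAt (fun u : ℝ => (u, (v:ℝ))) ((1:ℝ), (0:ℝ)) u :=
    HasDerivAt.prodMk (hasDerivAt_id u) (hasDerivAt_const u v)
  exact (hQ.differentiable one_ne_zero (u, v)).hasFDerivAt.comp_hasDerivAt u h1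

/-- Euler identity combined with integration by parts over the standard triangle:
if `u ∂Q/∂u + v ∂Q/∂v = λ Q + g` on `T`, then
`(λ + 2) ∬_T Q = ∫₀¹ Q(u, 1-u) du - ∬_T g`. -/
theorem triangle_euler_recursion (Q g : ℝ × ℝ → ℂ) (hQ : ContDiff ℝ 1 Q)
    (hg : Continuous g) (lam : ℂ)
    (heuler : ∀ u v : ℝ, 0 ≤ u → 0 ≤ v → u + v ≤ 1 →
      (u : ℂ) * fderiv ℝ Q (u, v) (1, 0) + (v : ℂ) * fderiv ℝ Q (u, v) (0, 1)
        = lam * Q (u, v) + g (u, v)) :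
    (lam + 2) * (∫ u in (0:ℝ)..1, ∫ v in (0:ℝ)..(1 - u), Q (u, v))
      = (∫ u in (0:ℝ)..1, Q (u, 1 - u))
        - ∫ u in (0:ℝ)..1, ∫ v in (0:ℝ)..(1 - u), g (u, v) := by
  have hcQ : Continuous Q := hQ.continuous
  set D1 : ℝ × ℝ → ℂ := fun p => fderiv ℝ Q p (1, 0) with hD1def
  set D2 : ℝ × ℝ → ℂ := fun p => fderiv ℝ Q p (0, 1) with hD2def
  have hcD1 : Continuous D1 := (hQ.continuous_fderiv one_ne_zero).clm_apply continuous_const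
  have hcD2 : Continuous D2 := (hQ.continuous_fderiv one_ne_zero).clm_apply continuous_const
  -- continuity of slices
  have hQu : ∀ u : ℝ, Continuous fun v => Q (u, v) :=
    fun u => hcQ.comp (continuous_const.prodMk continuous_id)
  have hgu : ∀ u : ℝ, Continuous fun v => g (u, v) :=
    fun u => hg.comp (continuous_const.prodMk continuous_id)
  have hD2u : ∀ u : ℝ, Continuous fun v => D2 (u, v) :=
    fun u => hcD2.comp (continuous_const.prodMk continuous_id)
  have hQv : ∀ v : ℝ, Continuous fun u => Q (u, v) :=
    fun v => hcQ.comp (continuous_id.prodMk continuous_const)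
  have hD1v : ∀ v : ℝ, Continuous fun u => D1 (u, v) :=
    fun v => hcD1.comp (continuous_id.prodMk continuous_const)
  -- IBP in `v`
  have ibpv : ∀ u : ℝ, (∫ v in (0:ℝ)..(1-u), (v:ℂ) * D2 (u, v))
      = ((1-u : ℝ):ℂ) * Q (u, 1-u) - ∫ v in (0:ℝ)..(1-u), Q (u, v) := fun u =>
    ibp (fun v => Q (u, v)) (fun v => D2 (u, v)) (1-u) (fun v => hderiv2 Q hQ u v)
      (hQu u) (hD2u u)
  -- IBP in `u`
  have ibpu : ∀ v : ℝ, (∫ u in (0:ℝ)..(1-v), (u:ℂ) * D1 (u, v))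
      = ((1-v : ℝ):ℂ) * Q (1-v, v) - ∫ u in (0:ℝ)..(1-v), Q (u, v) := fun v =>
    ibp (fun u => Q (u, v)) (fun u => D1 (u, v)) (1-v) (fun u => hderiv1 Q hQ u v)
      (hQv v) (hD1v v)
  -- pointwise identity for the inner integrals
  have hstep : ∀ u ∈ Set.uIcc (0:ℝ) 1,
      (∫ v in (0:ℝ)..(1-u), (u:ℂ) * D1 (u, v))
        = lam * (∫ v in (0:ℝ)..(1-u), Q (u, v)) + (∫ v in (0:ℝ)..(1-u), g (u, v))
          + (∫ v in (0:ℝ)..(1-u), Q (u, v)) - ((1-u : ℝ):ℂ) * Q (u, 1-u) := by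
    intro u hu
    rw [Set.uIcc_of_le zero_le_one] at hu
    have hsum : (∫ v in (0:ℝ)..(1-u), ((u:ℂ) * D1 (u, v) + (v:ℂ) * D2 (u, v)))
        = ∫ v in (0:ℝ)..(1-u), (lam * Q (u, v) + g (u, v)) := by
      apply intervalIntegral.integral_congr
      intro v hv
      rw [Set.uIcc_of_le (by linarith [hu.2])] at hv
      exact heuler u v hu.1 hv.1 (by linarith [hv.2])
    have i1 : IntervalIntegrable (fun v => (u:ℂ) * D1 (u, v)) volume 0 (1-u) :=
      (continuous_const.mul (hcD1.comp (continuous_const.prodMk continuous_id))).intervalIntegrable _ _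
    have i2 : IntervalIntegrable (fun v => (v:ℂ) * D2 (u, v)) volume 0 (1-u) :=
      (Complex.continuous_ofReal.mul (hD2u u)).intervalIntegrable _ _
    have i3 : IntervalIntegrable (fun v => lam * Q (u, v)) volume 0 (1-u) :=
      (continuous_const.mul (hQu u)).intervalIntegrable _ _
    have i4 : IntervalIntegrable (fun v => g (u, v)) volume 0 (1-u) :=
      (hgu u).intervalIntegrable _ _
    rw [intervalIntegral.integral_add i1 i2, intervalIntegral.integral_add i3 i4,
      intervalIntegral.integral_const_mul, intervalIntegral.integral_const_mul,
      ibpv u] at hsum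
    rw [intervalIntegral.integral_const_mul]
    linear_combination hsum
  -- integrate the pointwise identity over `u`
  have hL : (∫ u in (0:ℝ)..1, ∫ v in (0:ℝ)..(1-u), (u:ℂ) * D1 (u, v))
      = ∫ u in (0:ℝ)..1, (lam * (∫ v in (0:ℝ)..(1-u), Q (u, v))
          + (∫ v in (0:ℝ)..(1-u), g (u, v))
          + (∫ v in (0:ℝ)..(1-u), Q (u, v)) - ((1-u : ℝ):ℂ) * Q (u, 1-u)) :=
    intervalIntegral.integral_congr hstep
  -- continuity of the parametric integrals
  have contA : Continuous fun u : ℝ => ∫ v in (0:ℝ)..(1-u), Q (u, v) :=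
    intervalIntegral.continuous_parametric_intervalIntegral_of_continuous
      (show Continuous (Function.uncurry fun u v => Q (u, v)) from
        hcQ.comp (continuous_fst.prodMk continuous_snd))
      (continuous_const.sub continuous_id)
  have contAg : Continuous fun u : ℝ => ∫ v in (0:ℝ)..(1-u), g (u, v) :=
    intervalIntegral.continuous_parametric_intervalIntegral_of_continuous
      (show Continuous (Function.uncurry fun u v => g (u, v)) from
        hg.comp (continuous_fst.prodMk continuous_snd))
      (continuous_const.sub continuous_id)
  have contA' : Continuous fun v : ℝ => ∫ u in (0:ℝ)..(1-v), Q (u, v) :=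
    intervalIntegral.continuous_parametric_intervalIntegral_of_continuous
      (show Continuous (Function.uncurry fun v u => Q (u, v)) from
        hcQ.comp (continuous_snd.prodMk continuous_fst))
      (continuous_const.sub continuous_id)
  have contC : Continuous fun u : ℝ => ((1-u : ℝ):ℂ) * Q (u, 1-u) :=
    (Complex.continuous_ofReal.comp (continuous_const.sub continuous_id)).mul
      (hcQ.comp (continuous_id.prodMk (continuous_const.sub continuous_id)))
  have contC' : Continuous fun v : ℝ => ((1-v : ℝ):ℂ) * Q (1-v, v) :=
    (Complex.continuous_ofReal.comp (continuous_const.sub continuous_id)).mul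
      (hcQ.comp ((continuous_const.sub continuous_id).prodMk continuous_id))
  have contP : Continuous fun u : ℝ => ((u : ℝ):ℂ) * Q (u, 1-u) :=
    Complex.continuous_ofReal.mul
      (hcQ.comp (continuous_id.prodMk (continuous_const.sub continuous_id)))
  -- split the right-hand side of hL
  have ilamA : IntervalIntegrable (fun u => lam * ∫ v in (0:ℝ)..(1-u), Q (u, v)) volume 0 1 :=
    (continuous_const.mul contA).intervalIntegrable _ _
  have iA : IntervalIntegrable (fun u => ∫ v in (0:ℝ)..(1-u), Q (u, v)) volume 0 1 :=
    contA.intervalIntegrable _ _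
  have iAg : IntervalIntegrable (fun u => ∫ v in (0:ℝ)..(1-u), g (u, v)) volume 0 1 :=
    contAg.intervalIntegrable _ _
  have iC : IntervalIntegrable (fun u => ((1-u : ℝ):ℂ) * Q (u, 1-u)) volume 0 1 :=
    contC.intervalIntegrable _ _
  rw [intervalIntegral.integral_sub ((ilamA.add iAg).add iA) iC,
      intervalIntegral.integral_add (ilamA.add iAg) iA,
      intervalIntegral.integral_add ilamA iAg,
      intervalIntegral.integral_const_mul] at hL
  -- Fubini on the left-hand side of hL
  have hLs := tri_swap (fun p => ((p.1 : ℝ):ℂ) * D1 p)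
    ((Complex.continuous_ofReal.comp continuous_fst).mul hcD1)
  beta_reduce at hLs
  -- IBP in `u` on the swapped integral
  have hR : (∫ v in (0:ℝ)..1, ∫ u in (0:ℝ)..(1-v), (u:ℂ) * D1 (u, v))
      = ∫ v in (0:ℝ)..1, (((1-v : ℝ):ℂ) * Q (1-v, v) - ∫ u in (0:ℝ)..(1-v), Q (u, v)) :=
    intervalIntegral.integral_congr (fun v _ => ibpu v)
  rw [intervalIntegral.integral_sub (contC'.intervalIntegrable _ _)
    (contA'.intervalIntegrable _ _)] at hR
  -- substitution v ↦ 1 - u in the boundary term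
  have hsub : (∫ v in (0:ℝ)..1, ((1-v : ℝ):ℂ) * Q (1-v, v))
      = ∫ u in (0:ℝ)..1, ((u : ℝ):ℂ) * Q (u, 1-u) := by
    have hcomp := intervalIntegral.integral_comp_sub_left (a := (0:ℝ)) (b := 1)
      (fun x => ((x : ℝ):ℂ) * Q (x, 1-x)) 1
    simp only [sub_zero, sub_self] at hcomp
    rw [← hcomp]
    apply intervalIntegral.integral_congr
    intro v _
    have hvv : (1:ℝ) - (1 - v) = v := by ring
    simp only [hvv]
  -- Fubini for Q
  have hQfub := tri_swap Q hcQ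
  -- boundary terms recombine
  have hPR : (∫ u in (0:ℝ)..1, ((u : ℝ):ℂ) * Q (u, 1-u))
      + (∫ u in (0:ℝ)..1, ((1-u : ℝ):ℂ) * Q (u, 1-u))
      = ∫ u in (0:ℝ)..1, Q (u, 1-u) := by
    rw [← intervalIntegral.integral_add (contP.intervalIntegrable _ _)
      (contC.intervalIntegrable _ _)]
    apply intervalIntegral.integral_congr
    intro u _
    push_cast
    ring
  -- assemble everything
  rw [hLs, hR] at hL
  rw [hsub, ← hQfub] at hL
  linear_combination hPR - hL
end
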